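/- Let 0 ≤ s < r < t. There exists a constant C > 0, depending only on s, r and t, such that for every bounded function g : ℝ → ℝ and every δ ∈ (0,1), ‖g‖_{C^r} ≤ δ ‖g‖_{C^t} + C δ^{(s−r)/(t−r)} ‖g‖_{C^s}. -/

import Mathlib

open scoped ENNReal

noncomputable section

/-- `m`-fold iterated first-order difference operator `δ_h^m`. -/
def iterDiff (h : ℝ) : ℕ → (ℝ → ℝ) → ℝ → ℝ
  | 0, g => g
  | m + 1, g => fun x => iterDiff h m g (x + h) - iterDiff h m g x

/-- Hölder–Zygmund norm `‖g‖_{C^β} = sup |g| + sup_{h ≠ 0} |δ_h^{⌊β⌋+1} g(x)|/|h|^β`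
(extended-real valued; `⌊β⌋+1 = ⌈β⌉` for `β ≥ 0`, where `⌊β⌋` is the greatest integer
strictly less than `β`). -/
def zygNorm (β : ℝ) (g : ℝ → ℝ) : ℝ≥0∞ :=
  (⨆ x : ℝ, ENNReal.ofReal |g x|) +
    ⨆ (x : ℝ) (h : ℝ) (_ : h ≠ 0),
      ENNReal.ofReal (|iterDiff h ⌈β⌉₊ g x| / |h| ^ β)

open Finset

namespace ZygAux

def shiftE (a : ℝ) : Module.End ℝ (ℝ → ℝ) where
  toFun g := fun x => g (x + a)
  map_add' := by intros; rfl
  map_smul' := by intros; rfl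

@[simp] lemma shiftE_apply (a : ℝ) (g : ℝ → ℝ) (x : ℝ) : shiftE a g x = g (x + a) := rfl

lemma shiftE_mul (a b : ℝ) : shiftE a * shiftE b = shiftE (a + b) := by
  ext g x
  simp [shiftE, Module.End.mul_apply, add_assoc]

@[simp] lemma shiftE_zero : shiftE 0 = 1 := by
  ext g x; simp [shiftE]

lemma shiftE_comm (a b : ℝ) : Commute (shiftE a) (shiftE b) := by
  simp [Commute, SemiconjBy, shiftE_mul, add_comm]

lemma shiftE_pow (a : ℝ) (n : ℕ) : (shiftE a) ^ n = shiftE (n * a) := by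
  induction n with
  | zero => simp
  | succ n ih =>
      rw [pow_succ, ih, shiftE_mul]
      congr 1
      push_cast; ring

lemma iterDiff_eq_end (h : ℝ) (p : ℕ) (g : ℝ → ℝ) :
    iterDiff h p g = ((shiftE h - 1) ^ p) g := by
  induction p generalizing g with
  | zero => simp [iterDiff]
  | succ p ih =>
      funext x
      show iterDiff h p g (x + h) - iterDiff h p g x = _
      rw [ih, pow_succ, Module.End.mul_apply]
      have hc : Commute (shiftE h - 1) (shiftE h) :=
        ((Commute.refl (shiftE h)).sub_left (Commute.one_left (shiftE h)))
      have : ((shiftE h - 1) ^ p) g (x + h) = (shiftE h * (shiftE h - 1) ^ p) g x := rfl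
      rw [this, ← (hc.pow_left p).eq, Module.End.mul_apply]
      simp [LinearMap.sub_apply, map_sub, Pi.sub_apply]

lemma iterDiff_succ' (h : ℝ) (p : ℕ) (g : ℝ → ℝ) (x : ℝ) :
    iterDiff h (p + 1) g x = iterDiff h p g (x + h) - iterDiff h p g x := rfl

lemma iterDiff_add (h : ℝ) (a b : ℕ) (g : ℝ → ℝ) :
    iterDiff h (a + b) g = iterDiff h a (iterDiff h b g) := by
  rw [iterDiff_eq_end, iterDiff_eq_end, iterDiff_eq_end, pow_add, Module.End.mul_apply]

lemma iterDiff_neg (h : ℝ) (p : ℕ) (g : ℝ → ℝ) (x : ℝ) :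
    iterDiff (-h) p g x = (-1) ^ p * iterDiff h p g (x - p * h) := by
  induction p generalizing x with
  | zero => simp [iterDiff]
  | succ p ih =>
      rw [iterDiff_succ', ih, ih, iterDiff_succ']
      push_cast
      ring_nf

end ZygAux

namespace ZygAux2
open ZygAux

lemma double (h : ℝ) (p : ℕ) (g : ℝ → ℝ) (x : ℝ) :
    iterDiff (2 * h) p g x
      = ∑ j ∈ range (p + 1), (p.choose j : ℝ) * iterDiff h p g (x + j * h) := by
  set T := shiftE h with hT
  have h2 : shiftE (2 * h) = T ^ 2 := by
    rw [hT, shiftE_pow]; norm_num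
  have hc1 : Commute (T + 1) (T - 1) :=
    ((Commute.refl T).add_left (Commute.one_left T)).sub_right (Commute.one_right (T + 1))
  have key : (shiftE (2 * h) - 1) ^ p = ((T + 1) * (T - 1)) ^ p := by
    rw [h2]; congr 1
    rw [mul_sub, add_mul, mul_one, one_mul, pow_two]; abel
  rw [iterDiff_eq_end, key, hc1.mul_pow, (Commute.one_right T).add_pow]
  have : ((∑ m ∈ range (p + 1), T ^ m * 1 ^ (p - m) * (p.choose m : Module.End ℝ (ℝ → ℝ)))
        * (T - 1) ^ p) g x
      = ∑ m ∈ range (p + 1), ((T ^ m * (p.choose m : Module.End ℝ (ℝ → ℝ))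
        * (T - 1) ^ p) g) x := by
    rw [Finset.sum_mul, LinearMap.sum_apply, Finset.sum_apply]
    simp [one_pow, mul_one]
  rw [this]
  refine Finset.sum_congr rfl fun j hj => ?_
  rw [Module.End.mul_apply, Module.End.mul_apply, Module.End.natCast_apply]
  rw [shiftE_pow]
  simp only [shiftE_apply, Pi.smul_apply, hT, ← iterDiff_eq_end]
  simp [mul_comm]

end ZygAux2

namespace ZygAux3
open ZygAux ZygAux2

lemma bound_sup (g : ℝ → ℝ) (S : ℝ) (hg : ∀ x, |g x| ≤ S) (h : ℝ) (p : ℕ) :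
    ∀ x, |iterDiff h p g x| ≤ 2 ^ p * S := by
  induction p with
  | zero => intro x; simpa [iterDiff] using hg x
  | succ p ih =>
      intro x
      rw [iterDiff_succ']
      calc |iterDiff h p g (x + h) - iterDiff h p g x|
          ≤ |iterDiff h p g (x + h)| + |iterDiff h p g x| := abs_sub _ _
        _ ≤ 2 ^ p * S + 2 ^ p * S := add_le_add (ih _) (ih _)
        _ = 2 ^ (p + 1) * S := by ring

lemma bound_low (g : ℝ → ℝ) (c : ℝ) (h : ℝ) (k p : ℕ) (hkp : k ≤ p)
    (hg : ∀ x, |iterDiff h k g x| ≤ c) :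
    ∀ x, |iterDiff h p g x| ≤ 2 ^ (p - k) * c := by
  intro x
  obtain ⟨a, rfl⟩ : ∃ a, p = a + k := ⟨p - k, (Nat.sub_add_cancel hkp).symm⟩
  rw [iterDiff_add]
  simpa using bound_sup _ c hg h a x

lemma tele (h : ℝ) (p : ℕ) (g : ℝ → ℝ) (x : ℝ) (j : ℕ) :
    iterDiff h p g (x + j * h)
      = iterDiff h p g x + ∑ i ∈ Finset.range j, iterDiff h (p + 1) g (x + i * h) := by
  have hsum := Finset.sum_range_sub (f := fun i : ℕ => iterDiff h p g (x + i * h)) j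
  have heq : ∀ i : ℕ, iterDiff h p g (x + (i + 1 : ℕ) * h) - iterDiff h p g (x + i * h)
      = iterDiff h (p + 1) g (x + i * h) := by
    intro i
    rw [iterDiff_succ']
    congr 1
    push_cast; ring
  have h2 : ∑ i ∈ Finset.range j, iterDiff h (p + 1) g (x + i * h)
      = iterDiff h p g (x + j * h) - iterDiff h p g x := by
    rw [Finset.sum_congr rfl fun i _ => (heq i).symm, hsum]
    norm_num
  rw [h2]; ring

lemma marchaud_step (h : ℝ) (p : ℕ) (g : ℝ → ℝ) (c d : ℝ) (hc0 : 0 ≤ c)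
    (hc : ∀ y, |iterDiff h (p + 1) g y| ≤ c)
    (hd : ∀ y, |iterDiff (2 * h) p g y| ≤ d) (x : ℝ) :
    |iterDiff h p g x| ≤ d / 2 ^ p + p * c := by
  have hdd : iterDiff (2 * h) p g x
      = (2 : ℝ) ^ p * iterDiff h p g x
        + ∑ j ∈ Finset.range (p + 1), (p.choose j : ℝ)
            * ∑ i ∈ Finset.range j, iterDiff h (p + 1) g (x + i * h) := by
    rw [double]
    have : ∀ j ∈ Finset.range (p + 1), (p.choose j : ℝ) * iterDiff h p g (x + j * h)
        = (p.choose j : ℝ) * iterDiff h p g x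
          + (p.choose j : ℝ) * ∑ i ∈ Finset.range j, iterDiff h (p + 1) g (x + i * h) := by
      intro j _
      rw [tele, mul_add]
    rw [Finset.sum_congr rfl this, Finset.sum_add_distrib, ← Finset.sum_mul]
    have hch : ∑ j ∈ Finset.range (p + 1), (p.choose j : ℝ) = 2 ^ p := by
      rw [← Nat.cast_sum]
      rw [Nat.sum_range_choose]
      push_cast; ring
    rw [hch]
  have hR : |∑ j ∈ Finset.range (p + 1), (p.choose j : ℝ)
      * ∑ i ∈ Finset.range j, iterDiff h (p + 1) g (x + i * h)| ≤ 2 ^ p * (p * c) := by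
    calc |∑ j ∈ Finset.range (p + 1), (p.choose j : ℝ)
        * ∑ i ∈ Finset.range j, iterDiff h (p + 1) g (x + i * h)|
        ≤ ∑ j ∈ Finset.range (p + 1), |(p.choose j : ℝ)
            * ∑ i ∈ Finset.range j, iterDiff h (p + 1) g (x + i * h)| :=
          Finset.abs_sum_le_sum_abs _ _
      _ ≤ ∑ j ∈ Finset.range (p + 1), (p.choose j : ℝ) * (p * c) := by
          refine Finset.sum_le_sum fun j hj => ?_
          rw [abs_mul, abs_of_nonneg (by positivity : (0:ℝ) ≤ (p.choose j : ℝ))]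
          refine mul_le_mul_of_nonneg_left ?_ (by positivity)
          calc |∑ i ∈ Finset.range j, iterDiff h (p + 1) g (x + i * h)|
              ≤ ∑ i ∈ Finset.range j, |iterDiff h (p + 1) g (x + i * h)| :=
                Finset.abs_sum_le_sum_abs _ _
            _ ≤ ∑ _i ∈ Finset.range j, c := Finset.sum_le_sum fun i _ => hc _
            _ = j * c := by rw [Finset.sum_const, Finset.card_range]; ring
            _ ≤ p * c := by
                have : (j : ℝ) ≤ p := by
                  exact_mod_cast Nat.lt_succ_iff.mp (Finset.mem_range.mp hj)
                exact mul_le_mul_of_nonneg_right this hc0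
      _ = 2 ^ p * (p * c) := by
          rw [← Finset.sum_mul]
          congr 1
          rw [← Nat.cast_sum, Nat.sum_range_choose]; push_cast; ring
  have h2p : (0:ℝ) < 2 ^ p := by positivity
  rw [div_add' _ _ _ (ne_of_gt h2p), le_div_iff₀ h2p, ← abs_of_pos h2p, ← abs_mul]
  have : 2 ^ p * iterDiff h p g x
      = iterDiff (2 * h) p g x - ∑ j ∈ Finset.range (p + 1), (p.choose j : ℝ)
          * ∑ i ∈ Finset.range j, iterDiff h (p + 1) g (x + i * h) := by
    rw [hdd]; ring
  rw [mul_comm, this]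
  calc |_ - _| ≤ |iterDiff (2 * h) p g x| + |∑ j ∈ Finset.range (p + 1), (p.choose j : ℝ)
          * ∑ i ∈ Finset.range j, iterDiff h (p + 1) g (x + i * h)| := abs_sub _ _
    _ ≤ d + 2 ^ p * (p * c) := add_le_add (hd _) hR
    _ = d + p * c * 2 ^ p := by ring
    _ = d + p * c * |2 ^ p| := by rw [abs_of_pos h2p]

end ZygAux3

namespace ZygAux4
open ZygAux ZygAux2 ZygAux3

lemma iterate_raw (g : ℝ → ℝ) (p : ℕ) (β φ : ℝ → ℝ) (h0 : ℝ) (hh0 : 0 < h0)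
    (hβ : ∀ u, 0 < u → ∀ x, |iterDiff u p g x| ≤ β u)
    (hφ : ∀ u, 0 < u → u ≤ h0 → ∀ x, |iterDiff u (p + 1) g x| ≤ φ u)
    (hφ0 : ∀ u, 0 < u → 0 ≤ φ u) :
    ∀ N : ℕ, ∀ h : ℝ, 0 < h → 2 ^ N * h ≤ 2 * h0 →
      ∀ x, |iterDiff h p g x|
        ≤ β (2 ^ N * h) / 2 ^ (p * N) + p * ∑ j ∈ Finset.range N, φ (2 ^ j * h) / 2 ^ (p * j) := by
  intro N
  induction N with
  | zero =>
      intro h hh _ x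
      simpa using hβ h hh x
  | succ N ih =>
      intro h hh hle x
      have h2N : (2:ℝ) ≤ 2 ^ (N + 1) := by
        calc (2:ℝ) = 2 ^ 1 := (pow_one 2).symm
          _ ≤ 2 ^ (N + 1) := by
            apply pow_le_pow_right₀ (by norm_num) (by omega)
      have hhh0 : h ≤ h0 := by nlinarith
      have hcond : 2 ^ N * (2 * h) ≤ 2 * h0 := by
        calc 2 ^ N * (2 * h) = 2 ^ (N + 1) * h := by ring
          _ ≤ 2 * h0 := hle
      have hd : ∀ y, |iterDiff (2 * h) p g y|
          ≤ β (2 ^ N * (2 * h)) / 2 ^ (p * N)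
            + p * ∑ j ∈ Finset.range N, φ (2 ^ j * (2 * h)) / 2 ^ (p * j) :=
        fun y => ih (2 * h) (by linarith) hcond y
      have step := marchaud_step h p g (φ h)
        (β (2 ^ N * (2 * h)) / 2 ^ (p * N)
          + p * ∑ j ∈ Finset.range N, φ (2 ^ j * (2 * h)) / 2 ^ (p * j))
        (hφ0 h hh) (hφ h hh hhh0) hd x
      refine step.trans (le_of_eq ?_)
      rw [Finset.sum_range_succ']
      have e1 : 2 ^ N * (2 * h) = 2 ^ (N + 1) * h := by ring
      have e3 : ∀ j : ℕ, φ (2 ^ j * (2 * h)) / 2 ^ (p * j)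
          = (φ (2 ^ (j + 1) * h) / 2 ^ (p * (j + 1))) * 2 ^ p := by
        intro j
        have e2 : 2 ^ j * (2 * h) = 2 ^ (j + 1) * h := by ring
        rw [e2, pow_mul, pow_mul, pow_succ]
        have : ((2:ℝ) ^ p) ^ j * 2 ^ p ≠ 0 := by positivity
        field_simp
        ring
      rw [Finset.sum_congr rfl fun j _ => e3 j, ← Finset.sum_mul, e1]
      have h2p : ((2:ℝ) ^ p) ≠ 0 := by positivity
      have h2pN : ((2:ℝ) ^ (p * N)) ≠ 0 := by positivity
      rw [pow_mul, pow_mul, pow_succ]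
      field_simp
      ring

lemma exists_N (h h0 : ℝ) (h1 : 0 < h) (h2 : h ≤ h0) :
    ∃ N : ℕ, h0 ≤ 2 ^ N * h ∧ 2 ^ N * h ≤ 2 * h0 := by
  classical
  have hex : ∃ n : ℕ, h0 ≤ 2 ^ n * h := by
    obtain ⟨n, hn⟩ := pow_unbounded_of_one_lt (h0 / h) (one_lt_two (α := ℝ))
    refine ⟨n, ?_⟩
    rw [div_lt_iff₀ h1] at hn
    linarith
  refine ⟨Nat.find hex, Nat.find_spec hex, ?_⟩
  rcases Nat.eq_zero_or_pos (Nat.find hex) with hz | hpos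
  · rw [hz]
    have h0pos : 0 < h0 := lt_of_lt_of_le h1 h2
    simp only [pow_zero, one_mul]
    linarith
  · have hlt : 2 ^ (Nat.find hex - 1) * h < h0 :=
      lt_of_not_ge (Nat.find_min hex (by omega))
    have hpow : (2:ℝ) ^ Nat.find hex = 2 * 2 ^ (Nat.find hex - 1) := by
      rw [← pow_succ']
      congr 1
      omega
    rw [hpow]
    nlinarith

end ZygAux4

namespace ZygAux5
open ZygAux ZygAux2 ZygAux3 ZygAux4 Real

lemma iter_power (g : ℝ → ℝ) (p : ℕ) (σ τ : ℝ) (hσ : σ < p) (hτ : (p:ℝ) < τ)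
    (S2 B h0 : ℝ) (hS2 : 0 ≤ S2) (hB : 0 ≤ B) (hh0 : 0 < h0)
    (hβ : ∀ u, 0 < u → ∀ x, |iterDiff u p g x| ≤ S2 * u ^ σ)
    (hφ : ∀ u, 0 < u → u ≤ h0 → ∀ x, |iterDiff u (p + 1) g x| ≤ B * u ^ τ) :
    ∀ h, 0 < h → h ≤ h0 → ∀ x,
      |iterDiff h p g x| ≤ S2 * h0 ^ (σ - (p:ℝ)) * h ^ (p:ℝ)
        + ((p:ℝ) * 2 ^ (τ - (p:ℝ)) / (2 ^ (τ - (p:ℝ)) - 1)) * B * h0 ^ (τ - (p:ℝ)) * h ^ (p:ℝ) := by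
  intro h hh hhle x
  obtain ⟨N, hN1, hN2⟩ := exists_N h h0 hh hhle
  have main := iterate_raw g p (fun v => S2 * v ^ σ) (fun v => B * v ^ τ) h0 hh0
      hβ hφ (fun v hv => by positivity) N h hh hN2 x
  refine main.trans ?_
  set u : ℝ := 2 ^ N * h with hu
  have hupos : 0 < u := by positivity
  set q : ℝ := 2 ^ (τ - (p:ℝ)) with hq
  have hq1 : 1 < q := one_lt_rpow one_lt_two (by linarith)
  have hq0 : 0 < q - 1 := by linarith
  -- term 1
  have hterm1 : S2 * u ^ σ / 2 ^ (p * N) ≤ S2 * h0 ^ (σ - (p:ℝ)) * h ^ (p:ℝ) := by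
    have h2pN : ((2:ℝ)) ^ (p * N) = (u / h) ^ (p:ℝ) := by
      rw [Real.rpow_natCast, mul_comm p N, pow_mul]
      congr 1
      field_simp [hu]
      exact hu.symm
    rw [h2pN, Real.div_rpow hupos.le hh.le]
    have hune : u ^ (p:ℝ) ≠ 0 := ne_of_gt (rpow_pos_of_pos hupos _)
    have hhne : h ^ (p:ℝ) ≠ 0 := ne_of_gt (rpow_pos_of_pos hh _)
    have e : S2 * u ^ σ / (u ^ (p:ℝ) / h ^ (p:ℝ))
        = S2 * (u ^ σ / u ^ (p:ℝ)) * h ^ (p:ℝ) := by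
      field_simp
    rw [e, ← Real.rpow_sub hupos]
    have hmono : u ^ (σ - (p:ℝ)) ≤ h0 ^ (σ - (p:ℝ)) :=
      rpow_le_rpow_of_nonpos hh0 hN1 (by linarith)
    have hhp : (0:ℝ) ≤ h ^ (p:ℝ) := (rpow_pos_of_pos hh _).le
    exact mul_le_mul_of_nonneg_right (mul_le_mul_of_nonneg_left hmono hS2) hhp
  -- term 2
  have hsum_eq : ∑ j ∈ Finset.range N, B * (2 ^ j * h) ^ τ / 2 ^ (p * j)
      = B * h ^ τ * ∑ j ∈ Finset.range N, q ^ j := by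
    rw [Finset.mul_sum]
    refine Finset.sum_congr rfl fun j _ => ?_
    have e1 : ((2:ℝ) ^ j * h) ^ τ = ((2:ℝ) ^ j) ^ τ * h ^ τ :=
      Real.mul_rpow (by positivity) hh.le
    have e2 : ((2:ℝ)) ^ (p * j) = ((2:ℝ) ^ j) ^ (p:ℝ) := by
      rw [Real.rpow_natCast, mul_comm p j, pow_mul]
    have e3 : ((2:ℝ) ^ j) ^ τ / ((2:ℝ) ^ j) ^ (p:ℝ) = ((2:ℝ) ^ j) ^ (τ - (p:ℝ)) :=
      (Real.rpow_sub (by positivity) _ _).symm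
    have e4 : ((2:ℝ) ^ j) ^ (τ - (p:ℝ)) = q ^ j := by
      rw [← Real.rpow_natCast_mul (by norm_num : (0:ℝ) ≤ 2) j (τ - (p:ℝ)), mul_comm,
        Real.rpow_mul_natCast (by norm_num : (0:ℝ) ≤ 2) (τ - (p:ℝ)) j]
    have e5 : B * (((2:ℝ) ^ j) ^ τ * h ^ τ) / ((2:ℝ) ^ j) ^ (p:ℝ)
        = B * h ^ τ * (((2:ℝ) ^ j) ^ τ / ((2:ℝ) ^ j) ^ (p:ℝ)) := by ring
    rw [e1, e2, e5, e3, e4]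
  have hgeom : ∑ j ∈ Finset.range N, q ^ j ≤ q ^ N / (q - 1) := by
    rw [geom_sum_eq (ne_of_gt hq1)]
    gcongr
    linarith
  have hqN : q ^ N ≤ (2 * h0 / h) ^ (τ - (p:ℝ)) := by
    have e : q ^ N = ((2:ℝ) ^ N) ^ (τ - (p:ℝ)) := by
      rw [← Real.rpow_mul_natCast (by norm_num : (0:ℝ) ≤ 2) (τ - (p:ℝ)) N, mul_comm,
        Real.rpow_natCast_mul (by norm_num : (0:ℝ) ≤ 2) N (τ - (p:ℝ))]
    rw [e]
    refine Real.rpow_le_rpow (by positivity) ?_ (by linarith)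
    rw [le_div_iff₀ hh]
    linarith [hN2]
  have hhp0 : (0:ℝ) ≤ h ^ τ := (rpow_pos_of_pos hh _).le
  have hterm2 : (p:ℝ) * ∑ j ∈ Finset.range N, B * (2 ^ j * h) ^ τ / 2 ^ (p * j)
      ≤ ((p:ℝ) * q / (q - 1)) * B * h0 ^ (τ - (p:ℝ)) * h ^ (p:ℝ) := by
    rw [hsum_eq]
    have step1 : B * h ^ τ * ∑ j ∈ Finset.range N, q ^ j
        ≤ B * h ^ τ * ((2 * h0 / h) ^ (τ - (p:ℝ)) / (q - 1)) := by
      refine mul_le_mul_of_nonneg_left ?_ (by positivity)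
      exact hgeom.trans (by gcongr)
    have eK : B * h ^ τ * ((2 * h0 / h) ^ (τ - (p:ℝ)) / (q - 1))
        = (q / (q - 1)) * B * h0 ^ (τ - (p:ℝ)) * h ^ (p:ℝ) := by
      rw [Real.div_rpow (by positivity) hh.le, Real.mul_rpow (by norm_num) hh0.le]
      have hhτ : h ^ τ = h ^ (τ - (p:ℝ)) * h ^ (p:ℝ) := by
        rw [← Real.rpow_add hh]
        congr 1
        ring
      rw [hhτ]
      have hne1 : h ^ (τ - (p:ℝ)) ≠ 0 := ne_of_gt (rpow_pos_of_pos hh _)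
      have hne2 : q - 1 ≠ 0 := ne_of_gt hq0
      field_simp
      ring
    calc (p:ℝ) * (B * h ^ τ * ∑ j ∈ Finset.range N, q ^ j)
        ≤ (p:ℝ) * (B * h ^ τ * ((2 * h0 / h) ^ (τ - (p:ℝ)) / (q - 1))) :=
          mul_le_mul_of_nonneg_left step1 (Nat.cast_nonneg p)
      _ = ((p:ℝ) * q / (q - 1)) * B * h0 ^ (τ - (p:ℝ)) * h ^ (p:ℝ) := by
          rw [eK]; ring
  exact add_le_add hterm1 hterm2

end ZygAux5

namespace ZygAux6
open ZygAux ZygAux2 ZygAux3 ZygAux4 ZygAux5 Real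

lemma Qmain (s t : ℝ) (k M : ℕ) (hs0 : 0 ≤ s) (hsk : s ≤ k) (htM1 : (M:ℝ) - 1 < t) :
    ∀ j p : ℕ, p + 1 + j = M → k ≤ p → s < p →
    ∃ A : ℝ, 0 < A ∧ ∀ (g : ℝ → ℝ) (S T h0 : ℝ), 0 ≤ S → 0 ≤ T → 0 < h0 →
      (∀ u, 0 < u → ∀ x, |iterDiff u k g x| ≤ S * u ^ s) →
      (∀ u, 0 < u → ∀ x, |iterDiff u M g x| ≤ T * u ^ t) →
      ∀ h, 0 < h → h ≤ h0 → ∀ x,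
        |iterDiff h p g x| ≤ A * (T * h0 ^ (t - (p:ℝ)) + S * h0 ^ (s - (p:ℝ))) * h ^ ((p:ℕ):ℝ) := by
  intro j
  induction j with
  | zero =>
      intro p hpM hkp hsp
      have hpt : (p:ℝ) < t := by
        have hMp : (p:ℕ) + 1 = M := by omega
        have : ((p:ℕ):ℝ) = (M:ℝ) - 1 := by push_cast [← hMp]; ring
        rw [this]; exact htM1
      have hq1 : (1:ℝ) < 2 ^ (t - (p:ℝ)) := one_lt_rpow one_lt_two (by linarith)
      have hK : (0:ℝ) ≤ (p:ℝ) * 2 ^ (t - (p:ℝ)) / (2 ^ (t - (p:ℝ)) - 1) :=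
        div_nonneg (by positivity) (by linarith)
      have h2pk : (0:ℝ) < 2 ^ (p - k) := by positivity
      refine ⟨2 ^ (p - k) + (p:ℝ) * 2 ^ (t - (p:ℝ)) / (2 ^ (t - (p:ℝ)) - 1) + 1,
        by linarith, ?_⟩
      intro g S T h0 hS hT hh0 hsB htB h hh hhle x
      have hM : M = p + 1 := by omega
      have hβ : ∀ u, 0 < u → ∀ y, |iterDiff u p g y| ≤ (2 ^ (p - k) * S) * u ^ s := by
        intro u hu y
        have := bound_low g (S * u ^ s) u k p hkp (fun z => hsB u hu z) y
        calc |iterDiff u p g y| ≤ 2 ^ (p - k) * (S * u ^ s) := this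
          _ = (2 ^ (p - k) * S) * u ^ s := by ring
      have hφ : ∀ u, 0 < u → u ≤ h0 → ∀ y, |iterDiff u (p + 1) g y| ≤ T * u ^ t := by
        intro u hu _ y
        rw [← hM]
        exact htB u hu y
      have hmain := iter_power g p s t hsp hpt (2 ^ (p - k) * S) T h0
        (by positivity) hT hh0 hβ hφ h hh hhle x
      refine hmain.trans ?_
      have hP : (0:ℝ) ≤ T * h0 ^ (t - (p:ℝ)) := by positivity
      have hQ : (0:ℝ) ≤ S * h0 ^ (s - (p:ℝ)) := by positivity
      have hhr : (0:ℝ) ≤ h ^ ((p:ℕ):ℝ) := (rpow_pos_of_pos hh _).le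
      nlinarith [mul_nonneg (mul_nonneg hK hP) hhr, mul_nonneg (mul_nonneg hK hQ) hhr,
        mul_nonneg (mul_nonneg h2pk.le hP) hhr, mul_nonneg (mul_nonneg h2pk.le hQ) hhr,
        mul_nonneg hP hhr, mul_nonneg hQ hhr]
  | succ j ih =>
      intro p hpM hkp hsp
      obtain ⟨A', hA', hIH⟩ := ih (p + 1) (by omega) (by omega) (by push_cast; linarith)
      have h21 : (0:ℝ) < 2 - 1 := by norm_num
      have hKnum : (0:ℝ) ≤ (p:ℝ) * 2 / (2 - 1) := div_nonneg (by positivity) h21.le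
      have h2pk : (0:ℝ) < 2 ^ (p - k) := by positivity
      refine ⟨2 ^ (p - k) + (p:ℝ) * 2 / (2 - 1) * A' + 1,
        by nlinarith, ?_⟩
      intro g S T h0 hS hT hh0 hsB htB h hh hhle x
      set B : ℝ := A' * (T * h0 ^ (t - ((p:ℝ) + 1)) + S * h0 ^ (s - ((p:ℝ) + 1))) with hB
      have hBpos : 0 ≤ B := by positivity
      have hβ : ∀ u, 0 < u → ∀ y, |iterDiff u p g y| ≤ (2 ^ (p - k) * S) * u ^ s := by
        intro u hu y
        have := bound_low g (S * u ^ s) u k p hkp (fun z => hsB u hu z) y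
        calc |iterDiff u p g y| ≤ 2 ^ (p - k) * (S * u ^ s) := this
          _ = (2 ^ (p - k) * S) * u ^ s := by ring
      have hφ : ∀ u, 0 < u → u ≤ h0 → ∀ y, |iterDiff u (p + 1) g y| ≤ B * u ^ ((p:ℝ) + 1) := by
        intro u hu hule y
        have := hIH g S T h0 hS hT hh0 hsB htB u hu hule y
        refine this.trans (le_of_eq ?_)
        rw [hB]
        push_cast
        ring
      have hmain := iter_power g p s ((p:ℝ) + 1) hsp (by linarith) (2 ^ (p - k) * S) B h0
        (by positivity) hBpos hh0 hβ hφ h hh hhle x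
      rw [show ((p:ℝ) + 1) - (p:ℝ) = 1 by ring] at hmain
      rw [Real.rpow_one, Real.rpow_one] at hmain
      have hsplit : ∀ a : ℝ, h0 ^ (a - ((p:ℝ) + 1)) * h0 = h0 ^ (a - (p:ℝ)) := by
        intro a
        rw [← Real.rpow_add_one (ne_of_gt hh0)]
        congr 1; ring
      have hBh0 : (p:ℝ) * 2 / (2 - 1) * B * h0
          = (p:ℝ) * 2 / (2 - 1) * (A' * (T * h0 ^ (t - (p:ℝ)) + S * h0 ^ (s - (p:ℝ)))) := by
        rw [mul_assoc]
        congr 1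
        calc B * h0 = A' * (T * (h0 ^ (t - ((p:ℝ) + 1)) * h0)
              + S * (h0 ^ (s - ((p:ℝ) + 1)) * h0)) := by rw [hB]; ring
          _ = A' * (T * h0 ^ (t - (p:ℝ)) + S * h0 ^ (s - (p:ℝ))) := by
              rw [hsplit t, hsplit s]
      rw [hBh0] at hmain
      refine hmain.trans ?_
      have hP : (0:ℝ) ≤ T * h0 ^ (t - (p:ℝ)) := by positivity
      have hQ : (0:ℝ) ≤ S * h0 ^ (s - (p:ℝ)) := by positivity
      have hhr : (0:ℝ) ≤ h ^ ((p:ℕ):ℝ) := (rpow_pos_of_pos hh _).le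
      nlinarith [mul_nonneg (mul_nonneg hKnum (mul_nonneg hA'.le hP)) hhr,
        mul_nonneg (mul_nonneg hKnum (mul_nonneg hA'.le hQ)) hhr,
        mul_nonneg (mul_nonneg h2pk.le hP) hhr, mul_nonneg (mul_nonneg h2pk.le hQ) hhr,
        mul_nonneg hP hhr, mul_nonneg hQ hhr]

end ZygAux6

namespace ZygAux7
open ZygAux ZygAux2 ZygAux3 ZygAux4 ZygAux5 ZygAux6 Real

lemma core (s r t : ℝ) (hs0 : 0 ≤ s) (hsr : s < r) (hrt : r < t) :
    ∃ C : ℝ, 0 < C ∧ ∀ (g : ℝ → ℝ) (S T : ℝ), 0 ≤ S → 0 ≤ T →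
      (∀ u, 0 < u → ∀ x, |iterDiff u (⌈s⌉₊) g x| ≤ S * u ^ s) →
      (∀ u, 0 < u → ∀ x, |iterDiff u (⌈t⌉₊) g x| ≤ T * u ^ t) →
      ∀ h0, 0 < h0 → ∀ h, 0 < h → ∀ x,
        |iterDiff h (⌈r⌉₊) g x| ≤ C * (T * h0 ^ (t - r) + S * h0 ^ (s - r)) * h ^ r := by
  set k := ⌈s⌉₊ with hk
  set m := ⌈r⌉₊ with hm
  set M := ⌈t⌉₊ with hM
  have hr0 : 0 < r := lt_of_le_of_lt hs0 hsr
  have ht0 : 0 < t := lt_trans hr0 hrt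
  have hsk : s ≤ (k:ℝ) := Nat.le_ceil s
  have hrm : r ≤ (m:ℝ) := Nat.le_ceil r
  have htM : t ≤ (M:ℝ) := Nat.le_ceil t
  have hkm : k ≤ m := Nat.ceil_le_ceil hsr.le
  have hmM : m ≤ M := Nat.ceil_le_ceil hrt.le
  have htM1 : (M:ℝ) - 1 < t := by
    have := Nat.ceil_lt_add_one ht0.le
    rw [← hM] at this
    linarith
  have hsm : s < (m:ℝ) := lt_of_lt_of_le hsr hrm
  -- auxiliary conversion: exponent m → exponent r
  have hconv : ∀ (h0 h : ℝ), 0 < h0 → 0 < h → h ≤ h0 → ∀ a : ℝ,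
      h0 ^ (a - (m:ℝ)) * h ^ ((m:ℕ):ℝ) ≤ h0 ^ (a - r) * h ^ r := by
    intro h0 h hh0 hh hle a
    have e1 : h0 ^ (a - (m:ℝ)) = h0 ^ (a - r) * h0 ^ (r - (m:ℝ)) := by
      rw [← Real.rpow_add hh0]; congr 1; ring
    have e2 : h ^ ((m:ℕ):ℝ) = h ^ ((m:ℝ) - r) * h ^ r := by
      rw [← Real.rpow_add hh]; congr 1; push_cast; ring
    have e3 : h ^ ((m:ℝ) - r) ≤ h0 ^ ((m:ℝ) - r) :=
      Real.rpow_le_rpow hh.le hle (by linarith)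
    have e4 : h0 ^ (r - (m:ℝ)) * h0 ^ ((m:ℝ) - r) = 1 := by
      rw [← Real.rpow_add hh0, show r - (m:ℝ) + ((m:ℝ) - r) = 0 by ring, Real.rpow_zero]
    calc h0 ^ (a - (m:ℝ)) * h ^ ((m:ℕ):ℝ)
        = (h0 ^ (a - r) * h ^ r) * (h0 ^ (r - (m:ℝ)) * h ^ ((m:ℝ) - r)) := by
          rw [e1, e2]; ring
      _ ≤ (h0 ^ (a - r) * h ^ r) * (h0 ^ (r - (m:ℝ)) * h0 ^ ((m:ℝ) - r)) := by
          refine mul_le_mul_of_nonneg_left ?_ (by positivity)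
          exact mul_le_mul_of_nonneg_left e3 (rpow_pos_of_pos hh0 _).le
      _ = h0 ^ (a - r) * h ^ r := by rw [e4, mul_one]
  -- the bound for h ≥ h0 (uses only the s-norm)
  have hbig : ∀ (g : ℝ → ℝ) (S : ℝ), 0 ≤ S →
      (∀ u, 0 < u → ∀ x, |iterDiff u k g x| ≤ S * u ^ s) →
      ∀ h0, 0 < h0 → ∀ h, 0 < h → h0 ≤ h → ∀ x,
        |iterDiff h m g x| ≤ 2 ^ (m - k) * (S * h0 ^ (s - r)) * h ^ r := by
    intro g S hS hsB h0 hh0 h hh hge x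
    have h1 : |iterDiff h m g x| ≤ 2 ^ (m - k) * (S * h ^ s) :=
      bound_low g (S * h ^ s) h k m hkm (fun z => hsB h hh z) x
    have e2 : h ^ s = h ^ (s - r) * h ^ r := by
      rw [← Real.rpow_add hh]; congr 1; ring
    have e3 : h ^ (s - r) ≤ h0 ^ (s - r) :=
      rpow_le_rpow_of_nonpos hh0 hge (by linarith)
    calc |iterDiff h m g x| ≤ 2 ^ (m - k) * (S * (h ^ (s - r) * h ^ r)) := by
          rw [← e2]; exact h1
      _ ≤ 2 ^ (m - k) * (S * (h0 ^ (s - r) * h ^ r)) := by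
          refine mul_le_mul_of_nonneg_left ?_ (by positivity)
          refine mul_le_mul_of_nonneg_left ?_ hS
          exact mul_le_mul_of_nonneg_right e3 (rpow_pos_of_pos hh _).le
      _ = 2 ^ (m - k) * (S * h0 ^ (s - r)) * h ^ r := by ring
  rcases eq_or_lt_of_le hmM with hmeq | hmlt
  · -- m = M : two-level case
    refine ⟨2 ^ (m - k) + 1, by positivity, ?_⟩
    intro g S T hS hT hsB htB h0 hh0 h hh x
    have hP : (0:ℝ) ≤ T * h0 ^ (t - r) := by positivity
    have hQ : (0:ℝ) ≤ S * h0 ^ (s - r) := by positivity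
    have hhr : (0:ℝ) < h ^ r := rpow_pos_of_pos hh r
    have h2pk : (0:ℝ) < 2 ^ (m - k) := by positivity
    rcases le_or_gt h h0 with hle | hgt
    · have h1 : |iterDiff h m g x| ≤ T * h ^ t := by
        rw [hmeq]; exact htB h hh x
      have e2 : h ^ t = h ^ (t - r) * h ^ r := by
        rw [← Real.rpow_add hh]; congr 1; ring
      have e3 : h ^ (t - r) ≤ h0 ^ (t - r) :=
        Real.rpow_le_rpow hh.le hle (by linarith)
      have h4 : |iterDiff h m g x| ≤ T * (h0 ^ (t - r) * h ^ r) := by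
        refine (by rw [← e2]; exact h1 : |iterDiff h m g x| ≤ T * (h ^ (t - r) * h ^ r)).trans ?_
        refine mul_le_mul_of_nonneg_left ?_ hT
        exact mul_le_mul_of_nonneg_right e3 hhr.le
      nlinarith [mul_nonneg hQ hhr.le, mul_nonneg hP hhr.le,
        mul_nonneg (mul_nonneg h2pk.le hP) hhr.le, mul_nonneg (mul_nonneg h2pk.le hQ) hhr.le]
    · have h1 := hbig g S hS hsB h0 hh0 h hh hgt.le x
      nlinarith [mul_nonneg hQ hhr.le, mul_nonneg hP hhr.le,
        mul_nonneg (mul_nonneg h2pk.le hP) hhr.le]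
  · -- m < M : use the downward induction
    obtain ⟨A, hA, hQmain⟩ := Qmain s t k M hs0 hsk htM1 (M - m - 1) m (by omega) hkm hsm
    refine ⟨2 ^ (m - k) + A + 1, by positivity, ?_⟩
    intro g S T hS hT hsB htB h0 hh0 h hh x
    have hP : (0:ℝ) ≤ T * h0 ^ (t - r) := by positivity
    have hQ : (0:ℝ) ≤ S * h0 ^ (s - r) := by positivity
    have hhr : (0:ℝ) < h ^ r := rpow_pos_of_pos hh r
    have h2pk : (0:ℝ) < 2 ^ (m - k) := by positivity
    rcases le_or_gt h h0 with hle | hgt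
    · have h1 := hQmain g S T h0 hS hT hh0 hsB htB h hh hle x
      have t1 : A * T * (h0 ^ (t - (m:ℝ)) * h ^ ((m:ℕ):ℝ))
          ≤ A * T * (h0 ^ (t - r) * h ^ r) :=
        mul_le_mul_of_nonneg_left (hconv h0 h hh0 hh hle t) (mul_nonneg hA.le hT)
      have t2 : A * S * (h0 ^ (s - (m:ℝ)) * h ^ ((m:ℕ):ℝ))
          ≤ A * S * (h0 ^ (s - r) * h ^ r) :=
        mul_le_mul_of_nonneg_left (hconv h0 h hh0 hh hle s) (mul_nonneg hA.le hS)
      have e0 : A * (T * h0 ^ (t - (m:ℝ)) + S * h0 ^ (s - (m:ℝ))) * h ^ ((m:ℕ):ℝ)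
          = A * T * (h0 ^ (t - (m:ℝ)) * h ^ ((m:ℕ):ℝ))
            + A * S * (h0 ^ (s - (m:ℝ)) * h ^ ((m:ℕ):ℝ)) := by ring
      rw [e0] at h1
      nlinarith [mul_nonneg hQ hhr.le, mul_nonneg hP hhr.le,
        mul_nonneg (mul_nonneg h2pk.le hP) hhr.le, mul_nonneg (mul_nonneg h2pk.le hQ) hhr.le,
        mul_nonneg (mul_nonneg hA.le hP) hhr.le, mul_nonneg (mul_nonneg hA.le hQ) hhr.le]
    · have h1 := hbig g S hS hsB h0 hh0 h hh hgt.le x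
      nlinarith [mul_nonneg hQ hhr.le, mul_nonneg hP hhr.le,
        mul_nonneg (mul_nonneg h2pk.le hP) hhr.le,
        mul_nonneg (mul_nonneg hA.le hP) hhr.le, mul_nonneg (mul_nonneg hA.le hQ) hhr.le]

end ZygAux7


/-- **Interpolation inequality for Hölder–Zygmund norms.**
For `0 ≤ s < r < t` there is `C > 0` such that for every bounded `g` and `δ ∈ (0,1)`,
`‖g‖_{C^r} ≤ δ ‖g‖_{C^t} + C δ^{(s−r)/(t−r)} ‖g‖_{C^s}`. -/
theorem statement2 (s r t : ℝ) (hs : 0 ≤ s) (hsr : s < r) (hrt : r < t) :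
    ∃ C : ℝ, 0 < C ∧ ∀ g : ℝ → ℝ, (∃ M, ∀ x, |g x| ≤ M) →
      ∀ δ : ℝ, δ ∈ Set.Ioo (0 : ℝ) 1 →
        zygNorm r g ≤ ENNReal.ofReal δ * zygNorm t g
          + ENNReal.ofReal (C * δ ^ ((s - r) / (t - r))) * zygNorm s g := by
  classical
  obtain ⟨C0, hC0, hcore⟩ := ZygAux7.core s r t hs hsr hrt
  set C1 : ℝ := C0 + 1 with hC1def
  have hC1 : (1:ℝ) < C1 := by linarith
  have hC1pos : (0:ℝ) < C1 := by linarith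
  have htr : (0:ℝ) < t - r := by linarith
  set β : ℝ := (t - s) / (t - r) with hβdef
  set α : ℝ := (s - r) / (t - r) with hαdef
  have hα0 : α ≤ 0 := by
    rw [hαdef]
    apply div_nonpos_of_nonpos_of_nonneg <;> linarith
  have hCβpos : (0:ℝ) < C1 ^ β := Real.rpow_pos_of_pos hC1pos β
  refine ⟨C1 ^ β + 1, by positivity, ?_⟩
  intro g _ δ hδ
  obtain ⟨hδ0, hδ1⟩ := hδ
  have hδα : (1:ℝ) ≤ δ ^ α := Real.one_le_rpow_of_pos_of_le_one_of_nonpos hδ0 hδ1.le hα0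
  have hδαpos : (0:ℝ) < δ ^ α := Real.rpow_pos_of_pos hδ0 α
  -- trivial cases: infinite norms
  by_cases hTtop : zygNorm t g = ⊤
  · rw [hTtop, ENNReal.mul_top (by simpa using (ENNReal.ofReal_pos.mpr hδ0).ne')]
    exact le_top.trans (le_self_add)
  by_cases hStop : zygNorm s g = ⊤
  · rw [hStop, ENNReal.mul_top]
    · exact le_top.trans (le_add_self)
    · have : (0:ℝ) < (C1 ^ β + 1) * δ ^ α := by positivity
      simpa using (ENNReal.ofReal_pos.mpr this).ne'
  set S : ℝ := (zygNorm s g).toReal with hSdef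
  set T : ℝ := (zygNorm t g).toReal with hTdef
  have hS0 : 0 ≤ S := ENNReal.toReal_nonneg
  have hT0 : 0 ≤ T := ENNReal.toReal_nonneg
  -- extract the real bounds from the finite norms
  have hgS : ∀ x, |g x| ≤ S := by
    intro x
    have h1 : ENNReal.ofReal |g x| ≤ zygNorm s g :=
      le_trans (le_iSup (fun x => ENNReal.ofReal |g x|) x) le_self_add
    have := ENNReal.toReal_mono hStop h1
    rwa [ENNReal.toReal_ofReal (abs_nonneg _)] at this
  have hsB : ∀ u, 0 < u → ∀ x, |iterDiff u (⌈s⌉₊) g x| ≤ S * u ^ s := by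
    intro u hu x
    have h1 : ENNReal.ofReal (|iterDiff u (⌈s⌉₊) g x| / |u| ^ s) ≤ zygNorm s g := by
      refine le_trans ?_ le_add_self
      exact le_iSup_of_le x (le_iSup_of_le u (le_iSup_of_le (ne_of_gt hu) le_rfl))
    have h2 := ENNReal.toReal_mono hStop h1
    rw [ENNReal.toReal_ofReal (by positivity)] at h2
    rw [div_le_iff₀ (Real.rpow_pos_of_pos (abs_pos.mpr (ne_of_gt hu)) s)] at h2
    rw [abs_of_pos hu] at h2
    linarith [h2]
  have htB : ∀ u, 0 < u → ∀ x, |iterDiff u (⌈t⌉₊) g x| ≤ T * u ^ t := by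
    intro u hu x
    have h1 : ENNReal.ofReal (|iterDiff u (⌈t⌉₊) g x| / |u| ^ t) ≤ zygNorm t g := by
      refine le_trans ?_ le_add_self
      exact le_iSup_of_le x (le_iSup_of_le u (le_iSup_of_le (ne_of_gt hu) le_rfl))
    have h2 := ENNReal.toReal_mono hTtop h1
    rw [ENNReal.toReal_ofReal (by positivity)] at h2
    rw [div_le_iff₀ (Real.rpow_pos_of_pos (abs_pos.mpr (ne_of_gt hu)) t)] at h2
    rw [abs_of_pos hu] at h2
    linarith [h2]
  -- choice of h0
  have hδC : (0:ℝ) < δ / C1 := by positivity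
  set h0 : ℝ := (δ / C1) ^ (1 / (t - r)) with hh0def
  have hh0 : 0 < h0 := Real.rpow_pos_of_pos hδC _
  have e1 : h0 ^ (t - r) = δ / C1 := by
    rw [hh0def, ← Real.rpow_mul hδC.le, one_div, inv_mul_cancel₀ (ne_of_gt htr),
      Real.rpow_one]
  have e2 : h0 ^ (s - r) = δ ^ α / C1 ^ α := by
    rw [hh0def, ← Real.rpow_mul hδC.le, hαdef,
      show 1 / (t - r) * (s - r) = (s - r) / (t - r) by ring,
      Real.div_rpow hδ0.le hC1pos.le]
  have hβα : β = 1 - α := by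
    rw [hβdef, hαdef]
    field_simp
    ring
  have hC1αne : C1 ^ α ≠ 0 := ne_of_gt (Real.rpow_pos_of_pos hC1pos α)
  have eC : C1 ^ β = C1 / C1 ^ α := by
    rw [eq_div_iff hC1αne, ← Real.rpow_add hC1pos,
      show β + α = 1 by rw [hβα]; ring, Real.rpow_one]
  have key : C1 * (T * h0 ^ (t - r) + S * h0 ^ (s - r))
      = δ * T + (C1 ^ β * δ ^ α) * S := by
    rw [e1, e2, eC]
    field_simp
  -- the pointwise seminorm bound
  have hpt : ∀ h : ℝ, h ≠ 0 → ∀ x,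
      |iterDiff h (⌈r⌉₊) g x| / |h| ^ r ≤ δ * T + (C1 ^ β * δ ^ α) * S := by
    have hpos : ∀ h : ℝ, 0 < h → ∀ x,
        |iterDiff h (⌈r⌉₊) g x| ≤ (δ * T + (C1 ^ β * δ ^ α) * S) * h ^ r := by
      intro h hh x
      have h1 := hcore g S T hS0 hT0 hsB htB h0 hh0 h hh x
      have h2 : C0 * (T * h0 ^ (t - r) + S * h0 ^ (s - r)) * h ^ r
          ≤ C1 * (T * h0 ^ (t - r) + S * h0 ^ (s - r)) * h ^ r := by
        have hX : (0:ℝ) ≤ T * h0 ^ (t - r) + S * h0 ^ (s - r) := by positivity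
        have hhr : (0:ℝ) ≤ h ^ r := (Real.rpow_pos_of_pos hh r).le
        have : C0 ≤ C1 := by linarith
        nlinarith [mul_nonneg hX hhr]
      rw [key] at h2
      linarith
    intro h hne x
    rcases lt_or_gt_of_ne hne with hneg | hposh
    · have hu : 0 < -h := by linarith
      have hflip := ZygAux.iterDiff_neg (-h) (⌈r⌉₊) g x
      rw [neg_neg] at hflip
      have habs : |iterDiff h (⌈r⌉₊) g x|
          = |iterDiff (-h) (⌈r⌉₊) g (x - (⌈r⌉₊ : ℝ) * (-h))| := by
        rw [hflip, abs_mul, abs_pow, abs_neg, abs_one, one_pow, one_mul]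
      rw [habs, ← abs_neg h]
      rw [div_le_iff₀ (Real.rpow_pos_of_pos (abs_pos.mpr (by linarith : -h ≠ 0)) r)]
      rw [abs_of_pos hu]
      exact hpos (-h) hu _
    · rw [div_le_iff₀ (Real.rpow_pos_of_pos (abs_pos.mpr hne) r), abs_of_pos hposh]
      exact hpos h hposh x
  -- assemble in ℝ≥0∞
  have hsup : (⨆ x : ℝ, ENNReal.ofReal |g x|) ≤ ENNReal.ofReal (δ ^ α * S) := by
    refine iSup_le fun x => ENNReal.ofReal_le_ofReal ?_
    nlinarith [hgS x]
  have hsem : (⨆ (x : ℝ) (h : ℝ) (_ : h ≠ 0),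
        ENNReal.ofReal (|iterDiff h (⌈r⌉₊) g x| / |h| ^ r))
      ≤ ENNReal.ofReal (δ * T + (C1 ^ β * δ ^ α) * S) := by
    refine iSup_le fun x => iSup_le fun h => iSup_le fun hne => ?_
    exact ENNReal.ofReal_le_ofReal (hpt h hne x)
  have step1 : zygNorm r g
      ≤ ENNReal.ofReal (δ ^ α * S) + ENNReal.ofReal (δ * T + (C1 ^ β * δ ^ α) * S) :=
    add_le_add hsup hsem
  have step2 : ENNReal.ofReal (δ ^ α * S) + ENNReal.ofReal (δ * T + (C1 ^ β * δ ^ α) * S)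
      = ENNReal.ofReal (δ * T) + ENNReal.ofReal ((C1 ^ β + 1) * δ ^ α * S) := by
    rw [← ENNReal.ofReal_add (by positivity) (by positivity),
      ← ENNReal.ofReal_add (by positivity) (by positivity)]
    congr 1
    ring
  have h3 : ENNReal.ofReal (δ * T) ≤ ENNReal.ofReal δ * zygNorm t g := by
    rw [ENNReal.ofReal_mul hδ0.le]
    exact mul_le_mul_right ENNReal.ofReal_toReal_le _
  have h4 : ENNReal.ofReal ((C1 ^ β + 1) * δ ^ α * S)
      ≤ ENNReal.ofReal ((C1 ^ β + 1) * δ ^ α) * zygNorm s g := by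
    rw [ENNReal.ofReal_mul (by positivity)]
    exact mul_le_mul_right ENNReal.ofReal_toReal_le _
  calc zygNorm r g
      ≤ ENNReal.ofReal (δ ^ α * S) + ENNReal.ofReal (δ * T + (C1 ^ β * δ ^ α) * S) := step1
    _ = ENNReal.ofReal (δ * T) + ENNReal.ofReal ((C1 ^ β + 1) * δ ^ α * S) := step2
    _ ≤ ENNReal.ofReal δ * zygNorm t g
        + ENNReal.ofReal ((C1 ^ β + 1) * δ ^ α) * zygNorm s g := add_le_add h3 h4

end
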